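/- Let p be a configuration of n points in ℝ^d, with n ≥ d, whose linear span is ℝ^d. Then the rank of the hyperconnectivity matrix H(p) equals dn − d(d+1)/2. -/

import Mathlib

open Finset

/-- The hyperconnectivity matrix of points `p 0, …, p (n-1)` in `ℝ^d`: one row for each
pair `{i,j}` with `i < j`, with block `p j` in the columns of vertex `i`, block `-p i`
in the columns of vertex `j`, and zeros elsewhere. -/
def hyperMatrix (n d : ℕ) (p : Fin n → Fin d → ℝ) :
    Matrix {e : Fin n × Fin n // e.1 < e.2} (Fin n × Fin d) ℝ :=
  fun e c =>
    if c.1 = e.1.1 then p e.1.2 c.2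
    else if c.1 = e.1.2 then -(p e.1.1 c.2)
    else 0

open Matrix

namespace HyperAux

section general
variable {n d : ℕ}


variable {n d : ℕ}

/-- Linear combination map `c ↦ ∑ i, c i • v i`. -/
def combo (v : Fin n → Fin d → ℝ) : (Fin n → ℝ) →ₗ[ℝ] (Fin d → ℝ) where
  toFun c := ∑ i, c i • v i
  map_add' a b := by simp [add_smul, Finset.sum_add_distrib]
  map_smul' r a := by simp [smul_smul, Finset.smul_sum]

lemma nondeg (p : Fin n → Fin d → ℝ) (hspan : Submodule.span ℝ (Set.range p) = ⊤)
    {M : Type*} [AddCommGroup M] [Module ℝ M]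
    (g : (Fin d → ℝ) →ₗ[ℝ] M) (h : ∀ i, g (p i) = 0) (v : Fin d → ℝ) : g v = 0 := by
  have hle : Submodule.span ℝ (Set.range p) ≤ LinearMap.ker g := by
    rw [Submodule.span_le]; rintro _ ⟨i, rfl⟩; exact h i
  rw [hspan] at hle
  exact hle Submodule.mem_top

lemma vanish (p : Fin n → Fin d → ℝ) (hspan : Submodule.span ℝ (Set.range p) = ⊤)
    (v : Fin d → ℝ) (h : ∀ i, p i ⬝ᵥ v = 0) : v = 0 := by
  have := nondeg p hspan
    { toFun := fun w => w ⬝ᵥ v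
      map_add' := fun a b => add_dotProduct a b v
      map_smul' := fun r a => smul_dotProduct r a v } h v
  simpa [dotProduct_self_eq_zero] using this


end general


/-- Submodule of symmetric `d × d` matrices. -/
def symmSub (d : ℕ) : Submodule ℝ (Matrix (Fin d) (Fin d) ℝ) where
  carrier := {A | Aᵀ = A}
  add_mem' := by intro a b ha hb; simp_all [Matrix.transpose_add]
  zero_mem' := by simp
  smul_mem' := by intro r a ha; simp_all [Matrix.transpose_smul]

noncomputable def symmEquiv (d : ℕ) : symmSub d ≃ₗ[ℝ] ({q : Fin d × Fin d // q.1 ≤ q.2} → ℝ) where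
  toFun A q := A.1 q.1.1 q.1.2
  map_add' := by intros; rfl
  map_smul' := by intros; rfl
  invFun f := ⟨fun i j => if h : i ≤ j then f ⟨(i, j), h⟩ else f ⟨(j, i), le_of_not_ge h⟩, by
    ext i j
    rcases lt_trichotomy i j with h | h | h
    · show (if h : j ≤ i then f ⟨(j, i), h⟩ else f ⟨(i, j), le_of_not_ge h⟩) = _; simp [Matrix.transpose_apply, h.le, h.not_gt, not_le_of_gt h]
    · subst h; rfl
    · show (if h : j ≤ i then f ⟨(j, i), h⟩ else f ⟨(i, j), le_of_not_ge h⟩) = _; simp [Matrix.transpose_apply, h.le, not_le_of_gt h]⟩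
  left_inv := by
    rintro ⟨A, hA⟩
    ext i j
    dsimp
    split_ifs with h
    · rfl
    · exact (congrFun (congrFun hA i) j :)
  right_inv := by
    rintro f
    funext q
    obtain ⟨⟨i, j⟩, hq⟩ := q
    simp [hq]

lemma card_pairs (d : ℕ) :
    Fintype.card {q : Fin d × Fin d // q.1 ≤ q.2} = d * (d + 1) / 2 := by
  rw [← Fintype.card_congr (Sym2.sortEquiv (α := Fin d)), Sym2.card, Fintype.card_fin,
    Nat.choose_two_right]
  simp [Nat.mul_comm]

lemma finrank_symm (d : ℕ) :
    Module.finrank ℝ (symmSub d) = d * (d + 1) / 2 := by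
  rw [(symmEquiv d).finrank_eq, Module.finrank_pi, card_pairs]


lemma mem_symmSub {d : ℕ} (A : Matrix (Fin d) (Fin d) ℝ) : A ∈ symmSub d ↔ Aᵀ = A :=
  Iff.rfl

section main
variable {n d : ℕ}


variable {n d : ℕ}

def phi (p : Fin n → Fin d → ℝ) :
    Matrix (Fin d) (Fin d) ℝ →ₗ[ℝ] (Fin n × Fin d → ℝ) where
  toFun A c := A c.2 ⬝ᵥ p c.1
  map_add' a b := by funext c; exact add_dotProduct _ _ _
  map_smul' r a := by
    funext c
    show (r • a c.2) ⬝ᵥ p c.1 = r * (a c.2 ⬝ᵥ p c.1)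
    rw [smul_dotProduct]; rfl

lemma phi_apply (p : Fin n → Fin d → ℝ) (A : Matrix (Fin d) (Fin d) ℝ)
    (i : Fin n) : (fun k => phi p A (i, k)) = A *ᵥ p i := rfl

lemma hyper_apply (p : Fin n → Fin d → ℝ) (x : Fin n × Fin d → ℝ)
    (e : {e : Fin n × Fin n // e.1 < e.2}) :
    (hyperMatrix n d p).mulVec x e
      = p e.1.2 ⬝ᵥ (fun k => x (e.1.1, k)) - p e.1.1 ⬝ᵥ (fun k => x (e.1.2, k)) := by
  obtain ⟨⟨i, j⟩, hij⟩ := e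
  have hne : i ≠ j := hij.ne
  simp only [Matrix.mulVec, dotProduct, hyperMatrix, Fintype.sum_prod_type]
  have h1 : ∀ a : Fin n,
      (∑ k, (if a = i then p j k else if a = j then -(p i k) else 0) * x (a, k))
        = (if a = i then ∑ k, p j k * x (a, k) else 0)
          + (if a = j then ∑ k, -(p i k) * x (a, k) else 0) := by
    intro a
    by_cases h : a = i
    · subst h; simp [hne]
    · by_cases h' : a = j <;> simp [h, h', hne.symm]
  rw [Finset.sum_congr rfl fun a _ => h1 a, Finset.sum_add_distrib,
    Finset.sum_ite_eq' univ i, Finset.sum_ite_eq' univ j]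
  simp [sub_eq_add_neg, Finset.sum_neg_distrib]


lemma phi_inj (p : Fin n → Fin d → ℝ) (hspan : Submodule.span ℝ (Set.range p) = ⊤) :
    Function.Injective (phi p) := by
  rw [← LinearMap.ker_eq_bot, LinearMap.ker_eq_bot']
  intro A hA
  ext k m
  have hk : A k = 0 := by
    refine vanish p hspan _ fun i => ?_
    have := congrFun hA (i, m)  -- dummy; real below
    have h := congrFun hA (i, k)
    have : A k ⬝ᵥ p i = 0 := h
    rwa [dotProduct_comm] at this
  simp [congrFun hk m]


lemma ker_eq (p : Fin n → Fin d → ℝ) (hspan : Submodule.span ℝ (Set.range p) = ⊤) :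
    LinearMap.ker (hyperMatrix n d p).mulVecLin = (symmSub d).map (phi p) := by
  ext x
  rw [LinearMap.mem_ker, Submodule.mem_map]
  constructor
  · intro hx
    -- the vectors x_i
    set xi : Fin n → Fin d → ℝ := fun i k => x (i, k) with hxi
    have hrow : ∀ e : {e : Fin n × Fin n // e.1 < e.2},
        p e.1.2 ⬝ᵥ xi e.1.1 - p e.1.1 ⬝ᵥ xi e.1.2 = 0 := by
      intro e
      have := congrFun hx e
      rwa [mulVecLin_apply, hyper_apply] at this
    have hs : ∀ i j, p j ⬝ᵥ xi i = p i ⬝ᵥ xi j := by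
      intro i j
      rcases lt_trichotomy i j with h | h | h
      · exact sub_eq_zero.mp (hrow ⟨(i, j), h⟩)
      · subst h; rfl
      · exact (sub_eq_zero.mp (hrow ⟨(j, i), h⟩)).symm
    -- surjectivity of combo p
    have hrange : LinearMap.range (combo p) = ⊤ := by
      rw [eq_top_iff, ← hspan, Submodule.span_le]
      rintro _ ⟨i, rfl⟩
      refine ⟨Pi.single i 1, ?_⟩
      show (∑ i', Pi.single i 1 i' • p i') = p i
      rw [Finset.sum_eq_single i (by intro b _ hb; simp [Pi.single_apply, hb]) (by simp)]
      simp
    obtain ⟨Q, hQ⟩ := (combo p).exists_rightInverse_of_surjective hrange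
    set Al : (Fin d → ℝ) →ₗ[ℝ] (Fin d → ℝ) := (combo xi) ∘ₗ Q with hAl
    -- key bilinear identity
    have hcombo : ∀ (c : Fin n → ℝ) (j : Fin n),
        p j ⬝ᵥ combo xi c = combo p c ⬝ᵥ xi j := by
      intro c j
      show p j ⬝ᵥ (∑ i, c i • xi i) = (∑ i, c i • p i) ⬝ᵥ xi j
      have lhs : p j ⬝ᵥ (∑ i, c i • xi i) = ∑ i, c i * (p j ⬝ᵥ xi i) := by
        simp only [dotProduct, Finset.sum_apply, Pi.smul_apply, smul_eq_mul,
          Finset.mul_sum]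
        rw [Finset.sum_comm]
        exact Finset.sum_congr rfl fun i _ => Finset.sum_congr rfl fun k _ => by ring
      have rhs : (∑ i, c i • p i) ⬝ᵥ xi j = ∑ i, c i * (p i ⬝ᵥ xi j) := by
        simp only [dotProduct, Finset.sum_apply, Pi.smul_apply, smul_eq_mul,
          Finset.sum_mul, Finset.mul_sum]
        rw [Finset.sum_comm]
        exact Finset.sum_congr rfl fun i _ => Finset.sum_congr rfl fun k _ => by ring
      rw [lhs, rhs]
      exact Finset.sum_congr rfl fun i _ => by rw [hs i j]
    have key : ∀ (v : Fin d → ℝ) (j : Fin n), p j ⬝ᵥ Al v = v ⬝ᵥ xi j := by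
      intro v j
      have h2 : combo p (Q v) = v := by
        have := LinearMap.congr_fun hQ v; simpa using this
      calc p j ⬝ᵥ Al v = combo p (Q v) ⬝ᵥ xi j := hcombo (Q v) j
        _ = v ⬝ᵥ xi j := by rw [h2]
    have claim2 : ∀ i, Al (p i) = xi i := by
      intro i
      have : ∀ j, p j ⬝ᵥ (Al (p i) - xi i) = 0 := by
        intro j
        rw [dotProduct_sub, key, hs i j, sub_eq_zero, dotProduct_comm]
      exact sub_eq_zero.mp (vanish p hspan _ this)
    -- symmetry of the bilinear form
    have hsymA : ∀ v w, w ⬝ᵥ Al v = v ⬝ᵥ Al w := by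
      intro v w
      have hg : ∀ j, p j ⬝ᵥ Al v - v ⬝ᵥ Al (p j) = 0 := by
        intro j
        rw [key v j, claim2 j, sub_self]
      have := nondeg p hspan
        { toFun := fun w => w ⬝ᵥ Al v - v ⬝ᵥ Al w
          map_add' := fun a b => by
            rw [add_dotProduct, Al.map_add, dotProduct_add]; ring
          map_smul' := fun r a => by
            rw [smul_dotProduct, Al.map_smul, dotProduct_smul]
            simp only [RingHom.id_apply, smul_eq_mul]
            ring } hg w
      exact sub_eq_zero.mp this
    -- the matrix of Al
    refine ⟨LinearMap.toMatrix' Al, ?_, ?_⟩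
    · rw [mem_symmSub]
      ext k m
      have hsingle : ∀ (u : Fin d → ℝ) (a : Fin d), Pi.single a 1 ⬝ᵥ u = u a := by
        intro u a
        simp [dotProduct, Pi.single_apply]
      have h1 : ∀ a b, LinearMap.toMatrix' Al a b = Pi.single a 1 ⬝ᵥ Al (Pi.single b 1) := by
        intro a b
        rw [LinearMap.toMatrix'_apply, hsingle]
      rw [Matrix.transpose_apply, h1, h1, hsymA]
    · funext c
      show LinearMap.toMatrix' Al c.2 ⬝ᵥ p c.1 = x c
      have h3 : (LinearMap.toMatrix' Al) *ᵥ p c.1 = Al (p c.1) := by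
        rw [← Matrix.toLin'_apply, Matrix.toLin'_toMatrix']
      have h4 : (LinearMap.toMatrix' Al *ᵥ p c.1) c.2 = LinearMap.toMatrix' Al c.2 ⬝ᵥ p c.1 := rfl
      rw [← h4, h3, claim2]
  · rintro ⟨A, hA, rfl⟩
    rw [mem_symmSub] at hA
    funext e
    rw [mulVecLin_apply, hyper_apply, phi_apply, phi_apply]
    rw [dotProduct_mulVec, ← Matrix.mulVec_transpose, hA, dotProduct_comm]
    exact sub_self _


end main

end HyperAux

/-- If `n ≥ d` and the points linearly span `ℝ^d`, the rank of the hyperconnectivity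
matrix equals `dn - d(d+1)/2`. -/
theorem hyperMatrix_rank (n d : ℕ) (hnd : d ≤ n) (p : Fin n → Fin d → ℝ)
    (hspan : Submodule.span ℝ (Set.range p) = ⊤) :
    (hyperMatrix n d p).rank = d * n - d * (d + 1) / 2 := by
  classical
  open HyperAux in
  have hrn := (hyperMatrix n d p).mulVecLin.finrank_range_add_finrank_ker
  have hdom : Module.finrank ℝ (Fin n × Fin d → ℝ) = n * d := by
    rw [Module.finrank_pi, Fintype.card_prod, Fintype.card_fin, Fintype.card_fin]
  have hker : Module.finrank ℝ (LinearMap.ker (hyperMatrix n d p).mulVecLin)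
      = d * (d + 1) / 2 := by
    rw [HyperAux.ker_eq p hspan,
      ← (Submodule.equivMapOfInjective _ (HyperAux.phi_inj p hspan)
        (HyperAux.symmSub d)).finrank_eq,
      HyperAux.finrank_symm]
  have hr : (hyperMatrix n d p).rank
      = Module.finrank ℝ (LinearMap.range (hyperMatrix n d p).mulVecLin) := rfl
  rw [hdom, hker] at hrn
  rw [hr, Nat.mul_comm d n]
  omega
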